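/- Let K̃ ⊆ Ṽ ⊗ k be a characteristic subspace with v ⊗ 1 ∉ K̃ and let K = π_v(K̃). Then the Artin invariant of K̃ equals σ0(K) + 1 if {x ∈ Ṽ : x ⊗ 1 ∈ K̃} ⊆ v^⊥, and equals σ0(K) otherwise. Here σ0(K̃) = (σ0 + 1) − dim_{F_p}{x ∈ Ṽ : x ⊗ 1 ∈ K̃} and σ0(K) = σ0 − dim_{F_p}{x ∈ V : x ⊗ 1 ∈ K}. -/

import Mathlib

open TensorProduct

section Basics

variable (p : ℕ) [Fact p.Prime]
variable (k : Type*) [Field k] [CharP k p] [Algebra (ZMod p) k]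

/-- The `p`-th power map on `k` as a `ZMod p`-linear map. -/
noncomputable def frobL : k →ₗ[ZMod p] k where
  toFun x := x ^ p
  map_add' x y := add_pow_char x y p
  map_smul' c x := by
    simp only [Algebra.smul_def, mul_pow, RingHom.id_apply]
    congr 1
    rw [← map_pow, ZMod.pow_card]

@[simp] lemma frobL_apply (x : k) : frobL p k x = x ^ p := rfl

instance frobSurj [IsAlgClosed k] : RingHomSurjective (frobenius k p) := by
  constructor
  intro y
  obtain ⟨z, hz⟩ := IsAlgClosed.exists_pow_nat_eq y (n := p) (Fact.out (p := p.Prime)).pos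
  exact ⟨z, by simpa [frobenius_def] using hz⟩

variable (V : Type*) [AddCommGroup V] [Module (ZMod p) V]

private lemma rT_smul (c : k) (m : k ⊗[ZMod p] V) :
    LinearMap.rTensor V (frobL p k) (c • m) = c ^ p • LinearMap.rTensor V (frobL p k) m := by
  induction m using TensorProduct.induction_on with
  | zero => simp
  | tmul a x => simp [TensorProduct.smul_tmul', smul_eq_mul, mul_pow]
  | add x y hx hy => simp [smul_add, hx, hy]

/-- The Frobenius-semilinear bijection `φ` of `k ⊗ V` determined by `φ(s ⊗ x) = s^p ⊗ x`. -/
noncomputable def phiT : (k ⊗[ZMod p] V) →ₛₗ[frobenius k p] (k ⊗[ZMod p] V) where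
  toFun := LinearMap.rTensor V (frobL p k)
  map_add' x y := map_add _ x y
  map_smul' c m := by
    show LinearMap.rTensor V (frobL p k) (c • m) = (frobenius k p) c • LinearMap.rTensor V (frobL p k) m
    rw [rT_smul, frobenius_def]

@[simp] lemma phiT_apply (m : k ⊗[ZMod p] V) :
    phiT p k V m = LinearMap.rTensor V (frobL p k) m := rfl

/-- A bilinear form is non-degenerate if its radical is zero. -/
def Nondeg {R M : Type*} [CommSemiring R] [AddCommMonoid M] [Module R M]
    (b : M →ₗ[R] M →ₗ[R] R) : Prop :=
  ∀ x, (∀ y, b x y = 0) → x = 0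

/-- A bilinear form is non-neutral if there is no totally isotropic subspace of half
dimension. -/
def NonNeutral {R M : Type*} [CommRing R] [AddCommGroup M] [Module R M]
    (b : M →ₗ[R] M →ₗ[R] R) : Prop :=
  ¬ ∃ W : Submodule R M, (∀ x ∈ W, ∀ y ∈ W, b x y = 0) ∧
      2 * Module.finrank R ↥W = Module.finrank R M

variable {p k V}

/-- A characteristic subspace of `V ⊗ k`, where `dim V = 2σ₀`: a totally isotropic
`k`-subspace of dimension `σ₀` with `dim (K + φ K) = σ₀ + 1`. -/
def IsCharSub [IsAlgClosed k] (σ₀ : ℕ) (b : LinearMap.BilinForm (ZMod p) V)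
    (K : Submodule k (k ⊗[ZMod p] V)) : Prop :=
  (∀ x ∈ K, ∀ y ∈ K, b.baseChange k x y = 0) ∧
  Module.finrank k ↥K = σ₀ ∧
  Module.finrank k ↥(K ⊔ K.map (phiT p k V)) = σ₀ + 1

/-- `{x ∈ V : x ⊗ 1 ∈ K}` as an `𝔽_p`-subspace of `V`. -/
def KcapV (K : Submodule k (k ⊗[ZMod p] V)) : Submodule (ZMod p) V where
  carrier := {x | (1 : k) ⊗ₜ[ZMod p] x ∈ K}
  add_mem' := by
    intro a b ha hb
    simp only [Set.mem_setOf_eq] at *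
    rw [TensorProduct.tmul_add]
    exact K.add_mem ha hb
  zero_mem' := by
    simp only [Set.mem_setOf_eq, TensorProduct.tmul_zero]
    exact K.zero_mem
  smul_mem' := by
    intro c x hx
    simp only [Set.mem_setOf_eq] at *
    rw [TensorProduct.tmul_smul]
    exact K.smul_of_tower_mem c hx

end Basics

section Quot

variable {p : ℕ} [Fact p.Prime]
variable {Vt : Type*} [AddCommGroup Vt] [Module (ZMod p) Vt]

/-- The orthogonal complement of a vector. -/
def perp (b : LinearMap.BilinForm (ZMod p) Vt) (v : Vt) : Submodule (ZMod p) Vt :=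
  LinearMap.ker (b v)

lemma self_mem_perp {b : LinearMap.BilinForm (ZMod p) Vt} {v : Vt} (hv : b v v = 0) :
    v ∈ perp b v := LinearMap.mem_ker.mpr hv

/-- The line spanned by an isotropic vector `v`, inside `v^⊥`. -/
noncomputable def lineV (b : LinearMap.BilinForm (ZMod p) Vt) (v : Vt) (hv : b v v = 0) :
    Submodule (ZMod p) (perp b v) :=
  Submodule.span (ZMod p) {⟨v, self_mem_perp hv⟩}

lemma lineV_le (b : LinearMap.BilinForm (ZMod p) Vt) (v : Vt) (hv : b v v = 0)
    {P : Submodule (ZMod p) (perp b v)}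
    (h : (⟨v, self_mem_perp hv⟩ : perp b v) ∈ P) : lineV b v hv ≤ P :=
  Submodule.span_le.mpr (Set.singleton_subset_iff.mpr h)

/-- The quotient `v^⊥ / ⟨v⟩`. -/
noncomputable abbrev Vquot (b : LinearMap.BilinForm (ZMod p) Vt) (v : Vt)
    (hv : b v v = 0) := (perp b v) ⧸ (lineV b v hv)

/-- Restriction of the form to `v^⊥`. -/
noncomputable def bRes (b : LinearMap.BilinForm (ZMod p) Vt) (v : Vt) :
    LinearMap.BilinForm (ZMod p) (perp b v) :=
  b.compl₁₂ (perp b v).subtype (perp b v).subtype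

lemma bRes_apply (b : LinearMap.BilinForm (ZMod p) Vt) (v : Vt) (x y : perp b v) :
    bRes b v x y = b x y := by
  simp [bRes]

noncomputable def bQuotAux (b : LinearMap.BilinForm (ZMod p) Vt) (v : Vt)
    (hsymm : ∀ x y, b x y = b y x) (hv : b v v = 0) :
    (perp b v) →ₗ[ZMod p] (Vquot b v hv) →ₗ[ZMod p] (ZMod p) where
  toFun x := Submodule.liftQ (lineV b v hv) (bRes b v x) (lineV_le b v hv (by
    rw [LinearMap.mem_ker, bRes_apply, hsymm]
    exact LinearMap.mem_ker.mp x.2))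
  map_add' x y := by
    apply LinearMap.ext
    intro z
    obtain ⟨w, rfl⟩ := Submodule.Quotient.mk_surjective _ z
    simp only [Submodule.liftQ_apply, LinearMap.add_apply, bRes_apply,
      Submodule.coe_add, map_add]
  map_smul' c x := by
    apply LinearMap.ext
    intro z
    obtain ⟨w, rfl⟩ := Submodule.Quotient.mk_surjective _ z
    simp only [Submodule.liftQ_apply, LinearMap.smul_apply, bRes_apply,
      Submodule.coe_smul, map_smul, RingHom.id_apply, smul_eq_mul]

/-- The symmetric bilinear form induced on `v^⊥/⟨v⟩` by the form of `Ṽ`. -/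
noncomputable def bQuot (b : LinearMap.BilinForm (ZMod p) Vt) (v : Vt)
    (hsymm : ∀ x y, b x y = b y x) (hv : b v v = 0) :
    LinearMap.BilinForm (ZMod p) (Vquot b v hv) :=
  Submodule.liftQ (lineV b v hv) (bQuotAux b v hsymm hv) (lineV_le b v hv (by
    rw [LinearMap.mem_ker]
    apply LinearMap.ext
    intro z
    obtain ⟨w, rfl⟩ := Submodule.Quotient.mk_surjective _ z
    simp only [bQuotAux, LinearMap.coe_mk, AddHom.coe_mk, Submodule.liftQ_apply,
      bRes_apply, LinearMap.zero_apply]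
    exact LinearMap.mem_ker.mp w.2))

variable (k : Type*) [Field k] [CharP k p] [Algebra (ZMod p) k]

/-- The base change to `k` of the inclusion `v^⊥ ⊆ Ṽ`. -/
noncomputable def iotaPerp (b : LinearMap.BilinForm (ZMod p) Vt) (v : Vt) :
    (k ⊗[ZMod p] ↥(perp b v)) →ₗ[k] (k ⊗[ZMod p] Vt) :=
  LinearMap.baseChange k (perp b v).subtype

/-- The base change to `k` of the quotient map `v^⊥ → v^⊥/⟨v⟩`. -/
noncomputable def qMap (b : LinearMap.BilinForm (ZMod p) Vt) (v : Vt) (hv : b v v = 0) :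
    (k ⊗[ZMod p] ↥(perp b v)) →ₗ[k] (k ⊗[ZMod p] (Vquot b v hv)) :=
  LinearMap.baseChange k (lineV b v hv).mkQ

/-- `π_v(K̃)`: the image of `K̃ ∩ (v^⊥ ⊗ k)` under the quotient map
`v^⊥ ⊗ k → (v^⊥/⟨v⟩) ⊗ k`. -/
noncomputable def piV (b : LinearMap.BilinForm (ZMod p) Vt) (v : Vt) (hv : b v v = 0)
    (K : Submodule k (k ⊗[ZMod p] Vt)) : Submodule k (k ⊗[ZMod p] (Vquot b v hv)) :=
  (K.comap (iotaPerp k b v)).map (qMap k b v hv)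

end Quot
section Decomp

variable {p : ℕ} [Fact p.Prime]
variable {k : Type*} [Field k] [CharP k p] [Algebra (ZMod p) k]
variable {V Vt : Type*} [AddCommGroup V] [Module (ZMod p) V]
  [AddCommGroup Vt] [Module (ZMod p) Vt]

/-- The characteristic subspace `K(B)` of `Ṽ ⊗ k` attached to a characteristic subspace
`K ⊆ V ⊗ k` and a vector `B ∈ V ⊗ k`: the span of `{x + ⟨x,B⟩v : x ∈ K}` together with
`w + B + (B²/2)v`. -/
noncomputable def KB (bV : LinearMap.BilinForm (ZMod p) V) (j : V →ₗ[ZMod p] Vt)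
    (v w : Vt) (K : Submodule k (k ⊗[ZMod p] V)) (B : k ⊗[ZMod p] V) :
    Submodule k (k ⊗[ZMod p] Vt) :=
  Submodule.span k
    (((fun x => LinearMap.baseChange k j x + (bV.baseChange k x B) • ((1 : k) ⊗ₜ[ZMod p] v)) '' K) ∪
      {(1 : k) ⊗ₜ[ZMod p] w + LinearMap.baseChange k j B +
        ((bV.baseChange k B B) / 2) • ((1 : k) ⊗ₜ[ZMod p] v)})

/-- `π_v(K̃)` computed using the fixed orthogonal decomposition `Ṽ = V ⊕ ⟨v,w⟩`:
the subspace of those `x ∈ V ⊗ k` admitting a lift `x + c·(v ⊗ 1)` lying in `K̃`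
(equivalently, whose image in `Ṽ ⊗ k` lies in `K̃ + ⟨v ⊗ 1⟩`). -/
noncomputable def projSub (j : V →ₗ[ZMod p] Vt) (v : Vt)
    (Kt : Submodule k (k ⊗[ZMod p] Vt)) : Submodule k (k ⊗[ZMod p] V) :=
  (Kt ⊔ Submodule.span k {(1 : k) ⊗ₜ[ZMod p] v}).comap (LinearMap.baseChange k j)

lemma mem_projSub {j : V →ₗ[ZMod p] Vt} {v : Vt} {Kt : Submodule k (k ⊗[ZMod p] Vt)}
    (x : k ⊗[ZMod p] V) (c : k)
    (h : LinearMap.baseChange k j x + c • ((1 : k) ⊗ₜ[ZMod p] v) ∈ Kt) :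
    x ∈ projSub j v Kt := by
  have : LinearMap.baseChange k j x
      = (LinearMap.baseChange k j x + c • ((1 : k) ⊗ₜ[ZMod p] v))
        + (-c) • ((1 : k) ⊗ₜ[ZMod p] v) := by
    rw [add_assoc, ← add_smul, add_neg_cancel, zero_smul, add_zero]
  rw [projSub, Submodule.mem_comap, this]
  exact Submodule.add_mem _ (Submodule.mem_sup_left h)
    (Submodule.mem_sup_right (Submodule.smul_mem _ _ (Submodule.mem_span_singleton_self _)))

variable [IsAlgClosed k]

/-- The condition `B - φ(B) ∈ K + φ(K)` defining `U(K)` before quotienting. -/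
def UCond (K : Submodule k (k ⊗[ZMod p] V)) (B : k ⊗[ZMod p] V) : Prop :=
  B - phiT p k V B ∈ K ⊔ K.map (phiT p k V)

/-- `{B ∈ V ⊗ k : B - φ(B) ∈ K + φ(K)}` as an additive group. -/
def Ugrp (K : Submodule k (k ⊗[ZMod p] V)) : AddSubgroup (k ⊗[ZMod p] V) where
  carrier := {B | B - phiT p k V B ∈ K ⊔ K.map (phiT p k V)}
  add_mem' := by
    intro a b ha hb
    simp only [Set.mem_setOf_eq] at *
    have e : a + b - phiT p k V (a + b) = (a - phiT p k V a) + (b - phiT p k V b) := by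
      rw [map_add]; abel
    rw [e]; exact Submodule.add_mem _ ha hb
  zero_mem' := by
    simp only [Set.mem_setOf_eq, map_zero, sub_zero]
    exact Submodule.zero_mem _
  neg_mem' := by
    intro a ha
    simp only [Set.mem_setOf_eq] at *
    have e : -a - phiT p k V (-a) = -(a - phiT p k V a) := by
      rw [map_neg]; abel
    rw [e]; exact Submodule.neg_mem _ ha

lemma mem_Ugrp {K : Submodule k (k ⊗[ZMod p] V)} {B : k ⊗[ZMod p] V} :
    B ∈ Ugrp K ↔ B - phiT p k V B ∈ K ⊔ K.map (phiT p k V) := Iff.rfl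

/-- The group `U(K) = {B : B - φ(B) ∈ K + φ(K)}/K`. -/
noncomputable abbrev UK (K : Submodule k (k ⊗[ZMod p] V)) :=
  (↥(Ugrp K)) ⧸ ((K.toAddSubgroup).addSubgroupOf (Ugrp K))

lemma one_tmul_mem_Ugrp (K : Submodule k (k ⊗[ZMod p] V)) (x : V) :
    (1 : k) ⊗ₜ[ZMod p] x ∈ Ugrp K := by
  have h : phiT p k V ((1 : k) ⊗ₜ[ZMod p] x) = (1 : k) ⊗ₜ[ZMod p] x := by
    rw [phiT_apply, LinearMap.rTensor_tmul, frobL_apply, one_pow]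
  rw [mem_Ugrp, h, sub_self]
  exact Submodule.zero_mem _

/-- The natural map `V → U(K)`, `x ↦ (x ⊗ 1) mod K`. -/
noncomputable def toUK (K : Submodule k (k ⊗[ZMod p] V)) : V →+ UK K :=
  (QuotientAddGroup.mk' ((K.toAddSubgroup).addSubgroupOf (Ugrp K))).comp
    (AddMonoidHom.codRestrict
      (((TensorProduct.mk (ZMod p) k V) (1 : k)).toAddMonoidHom) (Ugrp K)
      (fun x => one_tmul_mem_Ugrp K x))

/-- Iterates `φ^i(K)`. -/
noncomputable def phiPow (i : ℕ) (K : Submodule k (k ⊗[ZMod p] V)) :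
    Submodule k (k ⊗[ZMod p] V) :=
  (fun S : Submodule k (k ⊗[ZMod p] V) => S.map (phiT p k V))^[i] K

end Decomp


section MyAux

open Polynomial in

lemma exists_zmod_of_pow_eq {p : ℕ} [Fact p.Prime] {k : Type*} [Field k] [CharP k p]
    [Algebra (ZMod p) k] {c : k} (h : c ^ p = c) :
    ∃ r : ZMod p, algebraMap (ZMod p) k r = c := by
  by_contra hc
  push_neg at hc
  have hp2 : 2 ≤ p := (Fact.out (p := p.Prime)).two_le
  set f : k[X] := X ^ p - X with hf
  have hf0 : f ≠ 0 := by
    intro h0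
    have h1 : f.coeff p = 0 := by rw [h0]; simp
    rw [hf, coeff_sub, coeff_X_pow, coeff_X] at h1
    simp only [if_pos rfl] at h1
    have : ¬ (1 = p) := by omega
    rw [if_neg this] at h1
    norm_num at h1
  have hroot : ∀ a : k, a ^ p = a → a ∈ f.roots := by
    intro a ha
    rw [mem_roots hf0]
    simp [hf, IsRoot, ha]
  have hdeg : f.natDegree ≤ p := by
    calc f.natDegree ≤ max (X ^ p : k[X]).natDegree (X : k[X]).natDegree :=
          natDegree_sub_le _ _
    _ ≤ p := by simp; omega
  classical
  let S : Finset k := Finset.image (algebraMap (ZMod p) k) Finset.univ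
  have hcS : c ∉ S := by
    simp only [S, Finset.mem_image, Finset.mem_univ, true_and]
    rintro ⟨r, hr⟩
    exact hc r hr
  have hsub : insert c S ⊆ f.roots.toFinset := by
    intro a ha
    rw [Multiset.mem_toFinset]
    rcases Finset.mem_insert.mp ha with rfl | haS
    · exact hroot a h
    · simp only [S, Finset.mem_image, Finset.mem_univ, true_and] at haS
      obtain ⟨r, rfl⟩ := haS
      exact hroot _ (by rw [← map_pow, ZMod.pow_card])
  have hcard : (insert c S).card = p + 1 := by
    rw [Finset.card_insert_of_notMem hcS,
      Finset.card_image_of_injective _ (algebraMap (ZMod p) k).injective,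
      Finset.card_univ, ZMod.card]
  have h1 : (insert c S).card ≤ f.roots.toFinset.card := Finset.card_le_card hsub
  have h2 : f.roots.toFinset.card ≤ Multiset.card f.roots := Multiset.toFinset_card_le _
  have h3 : Multiset.card f.roots ≤ f.natDegree := card_roots' f
  omega


variable {p : ℕ} [Fact p.Prime]
variable {k : Type*} [Field k] [CharP k p] [Algebra (ZMod p) k]
variable {V : Type*} [AddCommGroup V] [Module (ZMod p) V]

lemma my_phiT_tmul (s : k) (x : V) :
    phiT p k V (s ⊗ₜ[ZMod p] x) = (s ^ p) ⊗ₜ[ZMod p] x := by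
  rw [phiT_apply, LinearMap.rTensor_tmul, frobL_apply]

lemma my_phiT_injective : Function.Injective (phiT p k V) := by
  intro a c hac
  have hf : Function.Injective (frobL p k) := fun s t hst =>
    frobenius_inj k p (by simpa [frobenius_def] using hst)
  exact Module.Flat.rTensor_preserves_injective_linearMap (M := V) (frobL p k) hf
    (by simpa [phiT_apply] using hac)

lemma my_phiT_one_tmul (x : V) : phiT p k V ((1:k) ⊗ₜ[ZMod p] x) = (1:k) ⊗ₜ[ZMod p] x := by
  rw [my_phiT_tmul, one_pow]

lemma my_baseChange_phiT (b : LinearMap.BilinForm (ZMod p) V) (X Y : k ⊗[ZMod p] V) :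
    b.baseChange k (phiT p k V X) (phiT p k V Y) = (b.baseChange k X Y) ^ p := by
  induction X using TensorProduct.induction_on with
  | zero => simp [zero_pow (Nat.Prime.ne_zero (Fact.out (p := p.Prime)))]
  | tmul s x =>
    induction Y using TensorProduct.induction_on with
    | zero => simp [zero_pow (Nat.Prime.ne_zero (Fact.out (p := p.Prime)))]
    | tmul t y =>
      rw [my_phiT_tmul, my_phiT_tmul, LinearMap.BilinForm.baseChange_tmul,
        LinearMap.BilinForm.baseChange_tmul, Algebra.smul_def, Algebra.smul_def,
        mul_pow, mul_pow, ← map_pow, ZMod.pow_card]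
    | add Y1 Y2 h1 h2 =>
      rw [map_add, map_add, map_add, h1, h2, add_pow_char]
  | add X1 X2 h1 h2 =>
    rw [map_add, map_add, map_add, LinearMap.add_apply, LinearMap.add_apply, h1, h2, add_pow_char]

lemma my_finrank_map_phiT [IsAlgClosed k] [FiniteDimensional k (k ⊗[ZMod p] V)]
    (K : Submodule k (k ⊗[ZMod p] V)) :
    Module.finrank k ↥(K.map (phiT p k V)) = Module.finrank k ↥K := by
  classical
  set n := Module.finrank k ↥K with hn
  haveI : Module.Free k ↥K := Module.Free.of_divisionRing k ↥K
  let e : Module.Basis (Fin n) k ↥K := Module.finBasis k ↥K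
  have hKspan : K = Submodule.span k (Set.range (fun i => ((e i : ↥K) : k ⊗[ZMod p] V))) := by
    conv_lhs => rw [← Submodule.map_subtype_top K, ← e.span_eq, Submodule.map_span]
    congr 1
    rw [← Set.range_comp]
    rfl
  have hmap : K.map (phiT p k V)
      = Submodule.span k (Set.range (fun i => phiT p k V ((e i : ↥K) : k ⊗[ZMod p] V))) := by
    conv_lhs => rw [hKspan]
    rw [Submodule.map_span, ← Set.range_comp]
    rfl
  have li : LinearIndependent k (fun i => phiT p k V ((e i : ↥K) : k ⊗[ZMod p] V)) := by
    rw [Fintype.linearIndependent_iff]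
    intro g hg i
    choose t ht using fun i => IsAlgClosed.exists_pow_nat_eq (g i)
      (Nat.Prime.pos (Fact.out (p := p.Prime)))
    have hsum : phiT p k V (∑ j, t j • ((e j : ↥K) : k ⊗[ZMod p] V)) = 0 := by
      rw [map_sum]
      simp only [LinearMap.map_smulₛₗ, frobenius_def, ht]
      exact hg
    have h0 : (∑ j, t j • ((e j : ↥K) : k ⊗[ZMod p] V)) = 0 :=
      my_phiT_injective (by rw [hsum, map_zero])
    have h1 : (∑ j, t j • e j) = (0 : ↥K) := by
      apply Subtype.val_injective
      push_cast
      simpa using h0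
    have h2 : ∀ j, t j = 0 := fun j =>
      Fintype.linearIndependent_iffₛ.mp e.linearIndependent t 0 (by simpa using h1) j
    rw [← ht i, h2 i, zero_pow (Nat.Prime.ne_zero (Fact.out (p := p.Prime)))]
  rw [hmap, finrank_span_eq_card li, Fintype.card_fin]

lemma my_nondeg_baseChange [FiniteDimensional (ZMod p) V] {b : LinearMap.BilinForm (ZMod p) V}
    (hnd : b.Nondegenerate) : (b.baseChange k).Nondegenerate := by
  classical
  let e := Module.finBasis (ZMod p) V
  have hdet := (LinearMap.BilinForm.nondegenerate_iff_det_ne_zero e).mp hnd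
  refine (LinearMap.BilinForm.nondegenerate_iff_det_ne_zero (e.baseChange k)).mpr ?_
  have hM : LinearMap.BilinForm.toMatrix (e.baseChange k) (b.baseChange k)
      = (algebraMap (ZMod p) k).mapMatrix (LinearMap.BilinForm.toMatrix e b) := by
    ext i j
    rw [LinearMap.BilinForm.toMatrix_apply, RingHom.mapMatrix_apply, Matrix.map_apply,
      LinearMap.BilinForm.toMatrix_apply, Module.Basis.baseChange_apply, Module.Basis.baseChange_apply,
      LinearMap.BilinForm.baseChange_tmul, mul_one, Algebra.smul_def, mul_one]
  rw [hM, ← RingHom.map_det]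
  intro h0
  exact hdet ((map_eq_zero_iff _ (algebraMap (ZMod p) k).injective).mp h0)

lemma my_span_one_tmul (z : k ⊗[ZMod p] V) :
    z ∈ Submodule.span k (Set.range (fun m : V => (1:k) ⊗ₜ[ZMod p] m)) := by
  induction z using TensorProduct.induction_on with
  | zero => exact Submodule.zero_mem _
  | tmul s m =>
    have : s ⊗ₜ[ZMod p] m = s • ((1:k) ⊗ₜ[ZMod p] m) := by
      rw [TensorProduct.smul_tmul', smul_eq_mul, mul_one]
    rw [this]
    exact Submodule.smul_mem _ _ (Submodule.subset_span ⟨m, rfl⟩)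
  | add x y hx hy => exact Submodule.add_mem _ hx hy

end MyAux


section CoreSec

variable {p : ℕ} [Fact p.Prime]
variable {k : Type*} [Field k] [IsAlgClosed k] [CharP k p] [Algebra (ZMod p) k]
variable {Vt : Type*} [AddCommGroup Vt] [Module (ZMod p) Vt]

lemma core_rational {σ0 : ℕ} {b : LinearMap.BilinForm (ZMod p) Vt}
    (hsymm : ∀ x y, b x y = b y x) (hnd : Nondeg b)
    (hdim : Module.finrank (ZMod p) Vt = 2 * σ0 + 2)
    {v : Vt} (hv : b v v = 0)
    {Kt : Submodule k (k ⊗[ZMod p] Vt)} (hKt : IsCharSub (σ0 + 1) b Kt)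
    (hvK : (1 : k) ⊗ₜ[ZMod p] v ∉ Kt)
    {x : Vt} (hx : b v x = 0) {c : k}
    (hmem : (1:k) ⊗ₜ[ZMod p] x + c • ((1:k) ⊗ₜ[ZMod p] v) ∈ Kt) : c ^ p = c := by
  haveI hfinVt : FiniteDimensional (ZMod p) Vt :=
    FiniteDimensional.of_finrank_pos (by rw [hdim]; omega)
  haveI : Module.Finite k (k ⊗[ZMod p] Vt) :=
    Module.Finite.of_basis ((Module.finBasis (ZMod p) Vt).baseChange k)
  set β := LinearMap.BilinForm.baseChange k b with hβ
  have hbsymm : LinearMap.IsSymm b := ⟨fun a a' => hsymm a a'⟩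
  have hβsymm : LinearMap.IsSymm β := LinearMap.BilinForm.IsSymm.baseChange k hbsymm
  have hβrefl : β.IsRefl := hβsymm.isRefl
  have hβnd : β.Nondegenerate := my_nondeg_baseChange ⟨hnd, fun y hy => hnd y (fun x => by rw [hsymm]; exact hy x)⟩
  have hrank : Module.finrank k (k ⊗[ZMod p] Vt) = 2 * σ0 + 2 := by
    rw [Module.finrank_baseChange, hdim]
  obtain ⟨hKiso, hKrank, hKsup⟩ := hKt
  have hKiso' : ∀ a ∈ Kt, ∀ y ∈ Kt, β a y = 0 := hKiso
  have hKle : Kt ≤ β.orthogonal Kt := fun z hz =>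
    (LinearMap.BilinForm.mem_orthogonal_iff).mpr (fun n hn => hKiso n hn z hz)
  have horth : Module.finrank k ↥(β.orthogonal Kt) = σ0 + 1 := by
    rw [LinearMap.BilinForm.finrank_orthogonal hβnd, hrank, hKrank]
    omega
  have hLag : β.orthogonal Kt = Kt :=
    (Submodule.eq_of_le_of_finrank_le hKle (by rw [horth, hKrank])).symm
  by_contra hne
  have hv1 : (1:k) ⊗ₜ[ZMod p] v ≠ 0 := fun h => hvK (by rw [h]; exact Kt.zero_mem)
  have hδ : c ^ p - c ≠ 0 := sub_ne_zero.mpr hne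
  set η := (1:k) ⊗ₜ[ZMod p] x + c • ((1:k) ⊗ₜ[ZMod p] v) with hη
  have hφη : phiT p k Vt η = (1:k) ⊗ₜ[ZMod p] x + c ^ p • ((1:k) ⊗ₜ[ZMod p] v) := by
    rw [hη, map_add, LinearMap.map_smulₛₗ, my_phiT_one_tmul, my_phiT_one_tmul, frobenius_def]
  have hdiff : phiT p k Vt η - η = (c ^ p - c) • ((1:k) ⊗ₜ[ZMod p] v) := by
    rw [hφη, hη, sub_smul (c ^ p) c ((1:k) ⊗ₜ[ZMod p] v)]
    abel
  set Kmap := Kt.map (phiT p k Vt) with hKmap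
  have hφηm : phiT p k Vt η ∈ Kmap := ⟨η, hmem, rfl⟩
  have hvrep : (1:k) ⊗ₜ[ZMod p] v = (c ^ p - c)⁻¹ • (phiT p k Vt η - η) := by
    rw [hdiff, smul_smul, inv_mul_cancel₀ hδ, one_smul]
  have hmapr : Module.finrank k ↥Kmap = σ0 + 1 := by
    rw [hKmap, my_finrank_map_phiT, hKrank]
  have hL : Module.finrank k ↥(Kt ⊓ Kmap) = σ0 := by
    have h := Submodule.finrank_sup_add_finrank_inf_eq Kt Kmap
    rw [hKrank, hmapr, hKsup] at h
    omega
  have hηnm : η ∉ Kmap := by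
    intro hm
    have h2 : (c ^ p - c) • ((1:k) ⊗ₜ[ZMod p] v) ∈ Kmap := by
      rw [← hdiff]; exact sub_mem hφηm hm
    have h3 : (1:k) ⊗ₜ[ZMod p] v ∈ Kmap := by
      have h4 := Submodule.smul_mem Kmap (c ^ p - c)⁻¹ h2
      rwa [smul_smul, inv_mul_cancel₀ hδ, one_smul] at h4
    obtain ⟨ξ, hξK, hξ⟩ := h3
    have hξv : ξ = (1:k) ⊗ₜ[ZMod p] v := my_phiT_injective (by rw [hξ, my_phiT_one_tmul])
    exact hvK (hξv ▸ hξK)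
  have hη0 : η ≠ 0 := by
    intro h0
    apply hv1
    have h1 : (c ^ p - c) • ((1:k) ⊗ₜ[ZMod p] v) = 0 := by
      rw [← hdiff, h0, map_zero, sub_zero]
    rcases smul_eq_zero.mp h1 with h | h
    · exact absurd h hδ
    · exact h
  have hKdec : (Kt ⊓ Kmap) ⊔ Submodule.span k {η} = Kt := by
    have hle : (Kt ⊓ Kmap) ⊔ Submodule.span k {η} ≤ Kt :=
      sup_le inf_le_left ((Submodule.span_singleton_le_iff_mem η Kt).mpr hmem)
    refine Submodule.eq_of_le_of_finrank_le hle ?_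
    have hdisj : (Kt ⊓ Kmap) ⊓ Submodule.span k {η} = ⊥ := by
      rw [eq_bot_iff]
      rintro z ⟨hz1, hz2⟩
      obtain ⟨t, rfl⟩ := Submodule.mem_span_singleton.mp hz2
      rcases eq_or_ne t 0 with rfl | ht
      · simp
      · exfalso
        apply hηnm
        have h5 : t • η ∈ Kmap := hz1.2
        have h6 := Submodule.smul_mem Kmap t⁻¹ h5
        rwa [smul_smul, inv_mul_cancel₀ ht, one_smul] at h6
    have h := Submodule.finrank_sup_add_finrank_inf_eq (Kt ⊓ Kmap) (Submodule.span k {η})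
    rw [hdisj, finrank_bot, hL, finrank_span_singleton hη0] at h
    rw [hKrank]
    omega
  have hβvη : β ((1:k) ⊗ₜ[ZMod p] v) η = 0 := by
    have e1 : β ((1:k) ⊗ₜ[ZMod p] v) ((1:k) ⊗ₜ[ZMod p] x) = 0 := by
      rw [hβ, LinearMap.BilinForm.baseChange_tmul, hx, zero_smul]
    have e2 : β ((1:k) ⊗ₜ[ZMod p] v) ((1:k) ⊗ₜ[ZMod p] v) = 0 := by
      rw [hβ, LinearMap.BilinForm.baseChange_tmul, hv, zero_smul]
    rw [hη, map_add, map_smul, e1, e2, smul_zero, add_zero]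
  have hall : ∀ ξ ∈ Kt, β ((1:k) ⊗ₜ[ZMod p] v) ξ = 0 := by
    intro ξ hξ
    rw [← hKdec] at hξ
    obtain ⟨l, hl, z, hz, rfl⟩ := Submodule.mem_sup.mp hξ
    obtain ⟨t, rfl⟩ := Submodule.mem_span_singleton.mp hz
    rw [map_add, map_smul, hβvη, smul_zero, add_zero]
    obtain ⟨hlK, hlM⟩ := hl
    obtain ⟨lam, hlamK, rfl⟩ := hlM
    rw [hvrep, map_smul, LinearMap.smul_apply, map_sub, LinearMap.sub_apply]
    have h1 : β (phiT p k Vt η) (phiT p k Vt lam) = 0 := by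
      have h2 := my_baseChange_phiT b η lam
      rw [← hβ] at h2
      rw [h2, hKiso' η hmem lam hlamK,
        zero_pow (Nat.Prime.ne_zero (Fact.out (p := p.Prime)))]
    rw [h1, hKiso' η hmem _ hlK, sub_zero, smul_zero]
  have hvorth : (1:k) ⊗ₜ[ZMod p] v ∈ β.orthogonal Kt :=
    (LinearMap.BilinForm.mem_orthogonal_iff).mpr (fun n hn => hβrefl _ _ (hall n hn))
  exact hvK (hLag ▸ hvorth)

end CoreSec


section LineSec

variable {p : ℕ} [Fact p.Prime]
variable {k : Type*} [Field k] [CharP k p] [Algebra (ZMod p) k]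
variable {Vt : Type*} [AddCommGroup Vt] [Module (ZMod p) Vt]

set_option maxHeartbeats 2000000 in
lemma my_line_mem (b : LinearMap.BilinForm (ZMod p) Vt) (v : Vt) (hv : b v v = 0)
    (w : k ⊗[ZMod p] ↥(lineV b v hv)) :
    ((lineV b v hv).subtype.baseChange k) w ∈
      Submodule.span k {(1:k) ⊗ₜ[ZMod p] (⟨v, self_mem_perp hv⟩ : perp b v)} := by
  induction w using TensorProduct.induction_on with
  | zero => simp
  | tmul s l =>
    obtain ⟨r, hr⟩ := Submodule.mem_span_singleton.mp l.2
    rw [LinearMap.baseChange_tmul, Submodule.subtype_apply]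
    have h1 : (l : ↥(perp b v)) = r • (⟨v, self_mem_perp hv⟩ : perp b v) := hr.symm
    have h3 : s ⊗ₜ[ZMod p] ((r : ZMod p) • (⟨v, self_mem_perp hv⟩ : ↥(perp b v)))
        = (r • s) ⊗ₜ[ZMod p] (⟨v, self_mem_perp hv⟩ : ↥(perp b v)) :=
      (TensorProduct.smul_tmul r s _).symm
    have h4 : ((r • s : k)) ⊗ₜ[ZMod p] (⟨v, self_mem_perp hv⟩ : ↥(perp b v))
        = (r • s : k) • ((1:k) ⊗ₜ[ZMod p] (⟨v, self_mem_perp hv⟩ : ↥(perp b v))) := by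
      rw [TensorProduct.smul_tmul', smul_eq_mul, mul_one]
    rw [h1, h3, h4]
    exact Submodule.smul_mem _ _ (Submodule.mem_span_singleton_self _)
  | add a c ha hc =>
    rw [map_add]
    exact Submodule.add_mem _ ha hc

end LineSec

set_option maxHeartbeats 1000000 in
theorem stmt2 (p : ℕ) [Fact p.Prime] (hp : p ≠ 2)
    (k : Type*) [Field k] [IsAlgClosed k] [CharP k p] [Algebra (ZMod p) k]
    (σ0 : ℕ)
    (Vt : Type*) [AddCommGroup Vt] [Module (ZMod p) Vt]
    (b : LinearMap.BilinForm (ZMod p) Vt)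
    (hsymm : ∀ x y, b x y = b y x) (hnd : Nondeg b) (hnn : NonNeutral b)
    (hdim : Module.finrank (ZMod p) Vt = 2 * σ0 + 2)
    (v : Vt) (hv0 : v ≠ 0) (hv : b v v = 0)
    (Kt : Submodule k (k ⊗[ZMod p] Vt))
    (hKt : IsCharSub (σ0 + 1) b Kt)
    (hvK : (1 : k) ⊗ₜ[ZMod p] v ∉ Kt) :
    (KcapV Kt ≤ perp b v →
      σ0 + 1 - Module.finrank (ZMod p) ↥(KcapV Kt) =
        (σ0 - Module.finrank (ZMod p) ↥(KcapV (piV k b v hv Kt))) + 1) ∧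
    (¬ KcapV Kt ≤ perp b v →
      σ0 + 1 - Module.finrank (ZMod p) ↥(KcapV Kt) =
        σ0 - Module.finrank (ZMod p) ↥(KcapV (piV k b v hv Kt))) := by
  haveI hfinVt : FiniteDimensional (ZMod p) Vt :=
    FiniteDimensional.of_finrank_pos (by rw [hdim]; omega)
  haveI : Module.Finite k (k ⊗[ZMod p] Vt) :=
    Module.Finite.of_basis ((Module.finBasis (ZMod p) Vt).baseChange k)
  set W := KcapV Kt with hW
  have hvW : v ∉ W := fun h => hvK h
  have hWiso : ∀ a ∈ W, ∀ y ∈ W, b a y = 0 := by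
    intro a ha y hy
    have h1 := hKt.1 _ ha _ hy
    rw [LinearMap.BilinForm.baseChange_tmul, mul_one, Algebra.smul_def, mul_one] at h1
    exact (algebraMap (ZMod p) k).injective (by rw [h1, map_zero])
  haveI : Module.Finite k (k ⊗[ZMod p] ↥W) :=
    Module.Finite.of_basis ((Module.finBasis (ZMod p) ↥W).baseChange k)
  -- `d ≤ σ0`
  have hdW : Module.finrank (ZMod p) ↥W ≤ σ0 := by
    by_contra hgt
    push_neg at hgt
    set f := (W.subtype).baseChange k with hf
    have hfinj : Function.Injective f := by
      have h2 := Module.Flat.lTensor_preserves_injective_linearMap (M := k)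
        W.subtype (Submodule.injective_subtype W)
      intro a c hac
      apply h2
      rw [← LinearMap.baseChange_eq_ltensor]
      exact hac
    have hrange : LinearMap.range f ≤ Kt := by
      rintro z ⟨w, rfl⟩
      induction w using TensorProduct.induction_on with
      | zero => simpa using Kt.zero_mem
      | tmul s m =>
        rw [hf, LinearMap.baseChange_tmul, Submodule.subtype_apply]
        have h3 : s ⊗ₜ[ZMod p] (m : Vt) = s • ((1:k) ⊗ₜ[ZMod p] (m : Vt)) := by
          rw [TensorProduct.smul_tmul', smul_eq_mul, mul_one]
        rw [h3]
        exact Kt.smul_mem _ m.2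
      | add a c ha hc =>
        rw [map_add]
        exact Kt.add_mem ha hc
    have h1 : Module.finrank k ↥(LinearMap.range f) = Module.finrank (ZMod p) ↥W := by
      have h2 := LinearMap.finrank_range_add_finrank_ker f
      rw [LinearMap.ker_eq_bot.mpr hfinj, finrank_bot, add_zero] at h2
      rw [h2, Module.finrank_baseChange]
    have h3 : Module.finrank k ↥(LinearMap.range f) ≤ σ0 + 1 := by
      rw [← hKt.2.1]
      exact Submodule.finrank_mono hrange
    have hd1 : Module.finrank (ZMod p) ↥W = σ0 + 1 := by omega
    exact hnn ⟨W, hWiso, by rw [hd1, hdim]; ring⟩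
  -- the projected rational points
  set S := W.comap (perp b v).subtype with hS
  have hpi : KcapV (piV k b v hv Kt) = S.map (lineV b v hv).mkQ := by
    ext z
    constructor
    · intro hz
      obtain ⟨ξ, hξmem, hξq⟩ := Submodule.mem_map.mp hz
      rw [Submodule.mem_comap] at hξmem
      obtain ⟨s, rfl⟩ := Submodule.mkQ_surjective (lineV b v hv) z
      have h0 : qMap k b v hv (ξ - (1:k) ⊗ₜ[ZMod p] s) = 0 := by
        rw [map_sub, hξq, qMap, LinearMap.baseChange_tmul, sub_self]
      have hco1 : (((lineV b v hv).subtype.baseChange k) :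
          k ⊗[ZMod p] ↥(lineV b v hv) → k ⊗[ZMod p] ↥(perp b v))
          = (lineV b v hv).subtype.lTensor k := LinearMap.baseChange_eq_ltensor _
      have hco2 : (((lineV b v hv).mkQ.baseChange k) :
          k ⊗[ZMod p] ↥(perp b v) → k ⊗[ZMod p] (Vquot b v hv))
          = (lineV b v hv).mkQ.lTensor k := LinearMap.baseChange_eq_ltensor _
      have hex := Module.Flat.lTensor_exact (M := k)
        (LinearMap.exact_subtype_mkQ (lineV b v hv))
      rw [← hco1, ← hco2] at hex
      obtain ⟨w, hw⟩ := (hex _).mp h0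
      have hsp : ξ - (1:k) ⊗ₜ[ZMod p] s ∈
          Submodule.span k {(1:k) ⊗ₜ[ZMod p] (⟨v, self_mem_perp hv⟩ : perp b v)} := by
        rw [← hw]
        exact my_line_mem b v hv w
      obtain ⟨cc, hcc⟩ := Submodule.mem_span_singleton.mp hsp
      have hξrep : (1:k) ⊗ₜ[ZMod p] s
          + cc • ((1:k) ⊗ₜ[ZMod p] (⟨v, self_mem_perp hv⟩ : perp b v)) = ξ := by
        rw [hcc]; abel
      have hι : (1:k) ⊗ₜ[ZMod p] (s : Vt) + cc • ((1:k) ⊗ₜ[ZMod p] v) ∈ Kt := by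
        have h4 : iotaPerp k b v ((1:k) ⊗ₜ[ZMod p] s
            + cc • ((1:k) ⊗ₜ[ZMod p] (⟨v, self_mem_perp hv⟩ : perp b v))) ∈ Kt := by
          rw [hξrep]; exact hξmem
        rwa [map_add, map_smul, iotaPerp, LinearMap.baseChange_tmul,
          LinearMap.baseChange_tmul] at h4
      have hs0 : b v (s : Vt) = 0 := LinearMap.mem_ker.mp s.2
      have hcp : cc ^ p = cc := core_rational hsymm hnd hdim hv hKt hvK hs0 hι
      obtain ⟨r, hr⟩ := exists_zmod_of_pow_eq hcp
      refine Submodule.mem_map.mpr ⟨s + r • (⟨v, self_mem_perp hv⟩ : perp b v), ?_, ?_⟩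
      · rw [hS, Submodule.mem_comap]
        show (1:k) ⊗ₜ[ZMod p] (((s + r • (⟨v, self_mem_perp hv⟩ : perp b v)) : perp b v) : Vt) ∈ Kt
        have h5 : (((s + r • (⟨v, self_mem_perp hv⟩ : perp b v)) : perp b v) : Vt)
            = (s : Vt) + r • v := rfl
        have h6 : (1:k) ⊗ₜ[ZMod p] ((r : ZMod p) • v)
            = ((r • (1:k)) ⊗ₜ[ZMod p] v : k ⊗[ZMod p] Vt) :=
          (TensorProduct.smul_tmul r (1:k) v).symm
        have h6' : (r • (1:k) : k) = cc := by
          rw [Algebra.smul_def, mul_one, hr]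
        have h7 : cc ⊗ₜ[ZMod p] v = cc • ((1:k) ⊗ₜ[ZMod p] v) := by
          rw [TensorProduct.smul_tmul', smul_eq_mul, mul_one]
        rw [h5, TensorProduct.tmul_add, h6, h6', h7]
        exact hι
      · rw [map_add, map_smul]
        have h7 : (lineV b v hv).mkQ (⟨v, self_mem_perp hv⟩ : perp b v) = 0 := by
          rw [Submodule.mkQ_apply, Submodule.Quotient.mk_eq_zero]
          exact Submodule.mem_span_singleton_self _
        rw [h7, smul_zero, add_zero]
    · intro hz
      obtain ⟨s, hsS, rfl⟩ := Submodule.mem_map.mp hz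
      refine Submodule.mem_map.mpr ⟨(1:k) ⊗ₜ[ZMod p] s, ?_, ?_⟩
      · rw [Submodule.mem_comap, iotaPerp, LinearMap.baseChange_tmul]
        exact hsS
      · rw [qMap, LinearMap.baseChange_tmul]
    -- finrank computations
  have hfr1 : Module.finrank (ZMod p) ↥(S.map (lineV b v hv).mkQ)
      = Module.finrank (ZMod p) ↥S := by
    have hcomp : S.map (lineV b v hv).mkQ
        = LinearMap.range ((lineV b v hv).mkQ ∘ₗ S.subtype) := by
      rw [LinearMap.range_comp, Submodule.range_subtype]
    have hker : LinearMap.ker ((lineV b v hv).mkQ ∘ₗ S.subtype) = ⊥ := by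
      rw [eq_bot_iff]
      intro s hs
      have h1 : (lineV b v hv).mkQ (s : perp b v) = 0 := hs
      have h2 : ((s : perp b v) : ↥(perp b v)) ∈ lineV b v hv := by
        rwa [Submodule.mkQ_apply, Submodule.Quotient.mk_eq_zero] at h1
      obtain ⟨r, hr⟩ := Submodule.mem_span_singleton.mp h2
      rcases eq_or_ne r 0 with rfl | hr0
      · have h3 : ((s : perp b v)) = 0 := by rw [← hr, zero_smul]
        have h4 : s = 0 := Subtype.val_injective h3
        rw [h4]
        exact Submodule.zero_mem ⊥
      · exfalso
        apply hvW
        have hWmem : (((s : perp b v)) : Vt) ∈ W := s.2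
        have h5 : (((s : perp b v)) : Vt) = r • v := by rw [← hr]; rfl
        rw [h5] at hWmem
        have h6 := W.smul_mem r⁻¹ hWmem
        rwa [smul_smul, inv_mul_cancel₀ hr0, one_smul] at h6
    have h8 := LinearMap.finrank_range_add_finrank_ker ((lineV b v hv).mkQ ∘ₗ S.subtype)
    rw [hker, finrank_bot, add_zero] at h8
    rw [hcomp, h8]
  have hfr2 : Module.finrank (ZMod p) ↥S = Module.finrank (ZMod p) ↥(perp b v ⊓ W) := by
    rw [← Submodule.map_comap_subtype]
    exact (Submodule.finrank_map_subtype_eq (perp b v) S).symm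
  constructor
  · intro hle
    have hWp : perp b v ⊓ W = W := inf_eq_right.mpr hle
    have h9 : Module.finrank (ZMod p) ↥(KcapV (piV k b v hv Kt))
        = Module.finrank (ZMod p) ↥W := by
      rw [hpi, hfr1, hfr2, hWp]
    rw [h9]
    omega
  · intro hnle
    rw [SetLike.not_le_iff_exists] at hnle
    obtain ⟨u, huW, hup⟩ := hnle
    have hbu : b v u ≠ 0 := fun h => hup (LinearMap.mem_ker.mpr h)
    set g := (b v) ∘ₗ W.subtype with hg
    have hker : Submodule.map W.subtype (LinearMap.ker g) = perp b v ⊓ W := by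
      ext y
      constructor
      · rintro ⟨w, hw, rfl⟩
        exact ⟨LinearMap.mem_ker.mpr hw, w.2⟩
      · rintro ⟨hy1, hy2⟩
        exact ⟨⟨y, hy2⟩, LinearMap.mem_ker.mpr (LinearMap.mem_ker.mp hy1), rfl⟩
    have hrange : LinearMap.range g = ⊤ := by
      rw [eq_top_iff]
      rintro t -
      refine ⟨(t * (b v u)⁻¹) • ⟨u, huW⟩, ?_⟩
      rw [map_smul]
      have h10 : g ⟨u, huW⟩ = b v u := rfl
      rw [h10, smul_eq_mul, mul_assoc, inv_mul_cancel₀ hbu, mul_one]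
    have h11 := LinearMap.finrank_range_add_finrank_ker g
    rw [hrange, finrank_top, Module.finrank_self] at h11
    have h12 : Module.finrank (ZMod p) ↥(LinearMap.ker g)
        = Module.finrank (ZMod p) ↥(perp b v ⊓ W) := by
      rw [← hker, Submodule.finrank_map_subtype_eq]
    have h13 : Module.finrank (ZMod p) ↥(KcapV (piV k b v hv Kt))
        = Module.finrank (ZMod p) ↥(perp b v ⊓ W) := by
      rw [hpi, hfr1, hfr2]
    rw [h13]
    omega
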